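/- Let P be a Poisson n-Lie algebra and I an ideal. Define I^{1)} = I, I^{k+1)} = I^{k)}·I (associative powers) and I^{(1} = I, I^{(k+1} = [I^{(k}, I, P, …, P] (n-Lie powers), and the combined series I¹ = I, I^{k+1} = [I^k, I, P, …, P] + I^k·I. Then for every k ≥ 1, I^k is contained in the sum over all tuples (r₁,…,r_t) with r₁+⋯+r_t = k of the products I^{r₁)} · I^{(r₂} ⋯ I^{(r_t} (with the convention that a factor with exponent 0 acts trivially). -/

import Mathlib

/-- Span of brackets with first entry in `S` and second entry in `T`. -/
def bk2 (F : Type*) {P : Type*} [Field F] [CommRing P] [Algebra F P] {m : ℕ}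
    (br : (Fin (m + 2) → P) → P) (S T : Submodule F P) : Submodule F P :=
  Submodule.span F {z | ∃ x : Fin (m + 2) → P, x 0 ∈ S ∧ x 1 ∈ T ∧ z = br x}

/-- An ideal of a Poisson `n`-Lie algebra. -/
def IsPoissonIdeal (F : Type*) {P : Type*} [Field F] [CommRing P] [Algebra F P]
    {m : ℕ} (br : (Fin (m + 2) → P) → P) (I : Submodule F P) : Prop :=
  (∀ a ∈ I, ∀ p : P, a * p ∈ I) ∧
    ∀ x : Fin (m + 2) → P, x 0 ∈ I → br x ∈ I

/-- Associative powers `I^{k)}` (0-indexed: `aPow I k = I^{k+1)}`). -/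
def aPow (F : Type*) {P : Type*} [Field F] [CommRing P] [Algebra F P]
    (I : Submodule F P) : ℕ → Submodule F P
  | 0 => I
  | k + 1 => aPow F I k * I

/-- `n`-Lie powers `I^{(k}` (0-indexed: `lPow I k = I^{(k+1}`). -/
def lPow (F : Type*) {P : Type*} [Field F] [CommRing P] [Algebra F P] {m : ℕ}
    (br : (Fin (m + 2) → P) → P) (I : Submodule F P) : ℕ → Submodule F P
  | 0 => I
  | k + 1 => bk2 F br (lPow F br I k) I

/-- Combined ideal lower central series (0-indexed: `cI I k = I^{k+1}`). -/
def cI (F : Type*) {P : Type*} [Field F] [CommRing P] [Algebra F P] {m : ℕ}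
    (br : (Fin (m + 2) → P) → P) (I : Submodule F P) : ℕ → Submodule F P
  | 0 => I
  | k + 1 => bk2 F br (cI F br I k) I ⊔ cI F br I k * I

/-- Product `I^{(r₂} ⋯ I^{(r_t}` associated with a list of positive exponents. -/
def lieProd (F : Type*) {P : Type*} [Field F] [CommRing P] [Algebra F P] {m : ℕ}
    (br : (Fin (m + 2) → P) → P) (I : Submodule F P) (l : List ℕ) :
    Submodule F P :=
  (l.map fun r => lPow F br I (r - 1)).foldr (· * ·) 1

section Aux

variable {F P : Type*} [Field F] [CommRing P] [Algebra F P] {m : ℕ}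
  (br : AlternatingMap F P P (Fin (m + 2)))

lemma bk2_le {S T U : Submodule F P}
    (h : ∀ x : Fin (m + 2) → P, x 0 ∈ S → x 1 ∈ T → br x ∈ U) :
    bk2 F (⇑br) S T ≤ U := by
  rw [bk2, Submodule.span_le]
  rintro z ⟨x, h0, h1, rfl⟩
  exact h x h0 h1

lemma cons_mem_bk2 {S T : Submodule F P} {p : P} {t : Fin (m + 1) → P}
    (hp : p ∈ S) (ht : t 0 ∈ T) :
    br (Fin.cons p t) ∈ bk2 F (⇑br) S T := by
  refine Submodule.subset_span ⟨Fin.cons p t, ?_, ?_, rfl⟩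
  · simpa using hp
  · rw [← Fin.succ_zero_eq_one, Fin.cons_succ]; exact ht

lemma cons_add' (t : Fin (m + 1) → P) (p q : P) :
    br (Fin.cons (p + q) t) = br (Fin.cons p t) + br (Fin.cons q t) :=
  br.toMultilinearMap.cons_add t p q

lemma cons_smul' (t : Fin (m + 1) → P) (c : F) (p : P) :
    br (Fin.cons (c • p) t) = c • br (Fin.cons p t) :=
  br.toMultilinearMap.cons_smul t c p

lemma tail_zero (x : Fin (m + 2) → P) : Fin.tail x 0 = x 1 := by
  rw [Fin.tail, Fin.succ_zero_eq_one]

lemma bk2_mono_left {S S' T : Submodule F P} (h : S ≤ S') :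
    bk2 F (⇑br) S T ≤ bk2 F (⇑br) S' T := by
  refine Submodule.span_mono ?_
  rintro z ⟨x, h0, h1, rfl⟩
  exact ⟨x, h h0, h1, rfl⟩

lemma bk2_iSup_le {ι : Sort*} (S : ι → Submodule F P) (T : Submodule F P) :
    bk2 F (⇑br) (⨆ i, S i) T ≤ ⨆ i, bk2 F (⇑br) (S i) T := by
  refine bk2_le br fun x h0 h1 => ?_
  rw [← Fin.cons_self_tail x]
  have ht : Fin.tail x 0 ∈ T := by rw [tail_zero]; exact h1
  refine Submodule.iSup_induction S (motive := fun p => br (Fin.cons p (Fin.tail x)) ∈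
      ⨆ i, bk2 F (⇑br) (S i) T) h0 ?_ ?_ ?_
  · intro i p hp
    exact Submodule.mem_iSup_of_mem i (cons_mem_bk2 br hp ht)
  · have h0' : br (Fin.cons (0 : P) (Fin.tail x)) = 0 := by
      have := cons_smul' br (Fin.tail x) (0 : F) 0
      simpa using this
    show br (Fin.cons (0 : P) (Fin.tail x)) ∈ _
    rw [h0']
    exact zero_mem _
  · intro p q hp hq
    rw [cons_add' br]
    exact add_mem hp hq

lemma bk2_mul_le
    (hLeib : ∀ (u v : P) (x : Fin (m + 1) → P),
      br (Fin.cons (u * v) x) = u * br (Fin.cons v x) + v * br (Fin.cons u x))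
    (S T U : Submodule F P) :
    bk2 F (⇑br) (S * T) U ≤ S * bk2 F (⇑br) T U ⊔ T * bk2 F (⇑br) S U := by
  refine bk2_le br fun x h0 h1 => ?_
  rw [← Fin.cons_self_tail x]
  have ht : Fin.tail x 0 ∈ U := by rw [tail_zero]; exact h1
  refine Submodule.mul_induction_on (C := fun p => br (Fin.cons p (Fin.tail x)) ∈
      S * bk2 F (⇑br) T U ⊔ T * bk2 F (⇑br) S U) h0 ?_ ?_
  · intro s hs t htt
    rw [hLeib s t (Fin.tail x)]
    refine add_mem ?_ ?_
    · exact le_sup_left (α := Submodule F P) (Submodule.mul_mem_mul hs (cons_mem_bk2 br htt ht))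
    · exact le_sup_right (α := Submodule F P) (Submodule.mul_mem_mul htt (cons_mem_bk2 br hs ht))
  · intro p q hp hq
    rw [cons_add' br]
    exact add_mem hp hq

lemma bk2_one_le
    (hLeib : ∀ (u v : P) (x : Fin (m + 1) → P),
      br (Fin.cons (u * v) x) = u * br (Fin.cons v x) + v * br (Fin.cons u x))
    (T : Submodule F P) : bk2 F (⇑br) 1 T ≤ ⊥ := by
  refine bk2_le br fun x h0 _ => ?_
  rw [← Fin.cons_self_tail x]
  obtain ⟨c, hc⟩ := Submodule.mem_one.mp h0
  have h1 : br (Fin.cons (1 : P) (Fin.tail x)) = 0 := by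
    have := hLeib 1 1 (Fin.tail x)
    simp only [one_mul] at this
    exact left_eq_add.mp this
  rw [← hc, Algebra.algebraMap_eq_smul_one, cons_smul' br, h1, smul_zero]
  exact Submodule.zero_mem ⊥

end Aux

section Main

variable {F P : Type*} [Field F] [CommRing P] [Algebra F P] {m : ℕ}
  (br : AlternatingMap F P P (Fin (m + 2))) (I : Submodule F P)

-- sanity: ring tactic in Submodule F P
example (A B C : Submodule F P) : A * (B * C) = B * (A * C) := by ring

lemma lieProd_cons (r : ℕ) (l : List ℕ) :
    lieProd F (⇑br) I (r :: l) = lPow F (⇑br) I (r - 1) * lieProd F (⇑br) I l := rfl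

lemma lieProd_nil : lieProd F (⇑br) I ([] : List ℕ) = 1 := rfl

/-- The summand associated to `(a, l)`. -/
def trm (a : ℕ) (l : List ℕ) : Submodule F P :=
  (if a = 0 then (1 : Submodule F P) else aPow F I (a - 1)) * lieProd F (⇑br) I l

/-- The target supremum. -/
def Tgt (s : ℕ) : Submodule F P :=
  ⨆ (a : ℕ) (l : List ℕ) (_ : a + l.sum = s) (_ : ∀ r ∈ l, 0 < r), trm br I a l

lemma trm_le_Tgt {a : ℕ} {l : List ℕ} {s : ℕ} (h : a + l.sum = s)
    (hpos : ∀ r ∈ l, 0 < r) : trm br I a l ≤ Tgt br I s := by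
  exact le_iSup_of_le a (le_iSup_of_le l (le_iSup_of_le h (le_iSup_of_le hpos le_rfl)))

variable (hLeib : ∀ (u v : P) (x : Fin (m + 1) → P),
      br (Fin.cons (u * v) x) = u * br (Fin.cons v x) + v * br (Fin.cons u x))

include hLeib

lemma bk2_aPow_le (j : ℕ) :
    bk2 F (⇑br) (aPow F I j) I ≤
      (if j = 0 then (1 : Submodule F P) else aPow F I (j - 1)) * lPow F (⇑br) I 1 := by
  induction j with
  | zero =>
    rw [if_pos rfl, one_mul]
    exact le_rfl
  | succ j ih =>
    have h1 : bk2 F (⇑br) (aPow F I (j + 1)) I ≤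
        aPow F I j * bk2 F (⇑br) I I ⊔ I * bk2 F (⇑br) (aPow F I j) I :=
      bk2_mul_le br hLeib _ _ _
    refine h1.trans (sup_le ?_ ?_)
    · rw [if_neg (Nat.succ_ne_zero j), Nat.add_sub_cancel]
      exact le_rfl
    · refine (mul_le_mul' le_rfl ih).trans ?_
      rw [if_neg (Nat.succ_ne_zero j), Nat.add_sub_cancel]
      cases j with
      | zero =>
        rw [if_pos rfl, one_mul]
        exact le_rfl
      | succ j' =>
        rw [if_neg (Nat.succ_ne_zero j'), Nat.add_sub_cancel]
        have : I * (aPow F I j' * lPow F (⇑br) I 1) =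
            aPow F I j' * I * lPow F (⇑br) I 1 := by ring
        rw [this]
        exact le_rfl

lemma trm_mul_I_le (a : ℕ) (l : List ℕ) : trm br I a l * I ≤ trm br I (a + 1) l := by
  rw [trm, trm, if_neg (Nat.succ_ne_zero a), Nat.add_sub_cancel]
  cases a with
  | zero =>
    rw [if_pos rfl]
    have : (1 : Submodule F P) * lieProd F (⇑br) I l * I =
        aPow F I 0 * lieProd F (⇑br) I l := by show _ = I * _; ring
    rw [this]
  | succ a' =>
    rw [if_neg (Nat.succ_ne_zero a'), Nat.add_sub_cancel]
    have : aPow F I a' * lieProd F (⇑br) I l * I =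
        (aPow F I a' * I) * lieProd F (⇑br) I l := by ring
    rw [this]
    exact le_of_eq rfl

lemma lPow_mul_Tgt_le (r s : ℕ) (hr : 0 < r) :
    lPow F (⇑br) I (r - 1) * Tgt br I s ≤ Tgt br I (s + r) := by
  rw [Tgt, Submodule.mul_iSup]
  refine iSup_le fun a => ?_
  rw [Submodule.mul_iSup]
  refine iSup_le fun l => ?_
  rw [Submodule.mul_iSup]
  refine iSup_le fun hsum => ?_
  rw [Submodule.mul_iSup]
  refine iSup_le fun hpos => ?_
  have he : lPow F (⇑br) I (r - 1) * trm br I a l = trm br I a (r :: l) := by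
    rw [trm, trm, lieProd_cons]; ring
  rw [he]
  refine trm_le_Tgt br I ?_ ?_
  · rw [List.sum_cons]; omega
  · intro x hx
    rcases List.mem_cons.mp hx with h | h
    · omega
    · exact hpos x h

lemma key (l : List ℕ) (a : ℕ) (hpos : ∀ r ∈ l, 0 < r) :
    bk2 F (⇑br) (trm br I a l) I ≤ Tgt br I (a + l.sum + 1) := by
  induction l generalizing a with
  | nil =>
    rw [trm, lieProd_nil, mul_one]
    cases a with
    | zero =>
      rw [if_pos rfl]
      exact (bk2_one_le br hLeib I).trans bot_le
    | succ a' =>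
      rw [if_neg (Nat.succ_ne_zero a'), Nat.add_sub_cancel]
      refine (bk2_aPow_le br I hLeib a').trans ?_
      have he : (if a' = 0 then (1 : Submodule F P) else aPow F I (a' - 1)) *
          lPow F (⇑br) I 1 = trm br I a' [2] := by
        rw [trm, lieProd_cons, lieProd_nil, mul_one]
      rw [he]
      refine trm_le_Tgt br I (by simp) ?_
      intro x hx; simp at hx; omega
  | cons r l' ih =>
    have hr : 0 < r := hpos r List.mem_cons_self
    have hpos' : ∀ x ∈ l', 0 < x := fun x hx => hpos x (List.mem_cons_of_mem r hx)
    have he : trm br I a (r :: l') = lPow F (⇑br) I (r - 1) * trm br I a l' := by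
      rw [trm, trm, lieProd_cons]; ring
    rw [he]
    refine (bk2_mul_le br hLeib _ _ _).trans (sup_le ?_ ?_)
    · refine (mul_le_mul' le_rfl (ih a hpos')).trans ?_
      refine (lPow_mul_Tgt_le br I hLeib r _ hr).trans (le_of_eq ?_)
      congr 1
      rw [List.sum_cons]; omega
    · have hb : bk2 F (⇑br) (lPow F (⇑br) I (r - 1)) I = lPow F (⇑br) I r := by
        conv_rhs => rw [show r = (r - 1) + 1 by omega]
        rfl
      rw [hb]
      have he2 : trm br I a l' * lPow F (⇑br) I r = trm br I a ((r + 1) :: l') := by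
        rw [trm, trm, lieProd_cons, Nat.add_sub_cancel]; ring
      rw [he2]
      refine trm_le_Tgt br I ?_ ?_
      · rw [List.sum_cons, List.sum_cons]; omega
      · intro x hx
        rcases List.mem_cons.mp hx with h | h
        · omega
        · exact hpos' x h

end Main

/-- For an ideal `I` of a Poisson `n`-Lie algebra,
`I^k ⊆ Σ_{r₁+⋯+r_t=k} I^{r₁)} · I^{(r₂} ⋯ I^{(r_t}`, where a factor with
exponent `0` acts trivially (here encoded by the associative exponent `a`,
with `a = 0` meaning the associative factor is absent). -/
theorem ideal_lcs_le_mixed_products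
    (F P : Type*) [Field F] [CommRing P] [Algebra F P] (m : ℕ)
    (br : AlternatingMap F P P (Fin (m + 2)))
    (hFI : ∀ (x : Fin (m + 1) → P) (y : Fin (m + 2) → P),
      br (Fin.snoc x (br y)) =
        ∑ i, br (Function.update y i (br (Fin.snoc x (y i)))))
    (hLeib : ∀ (u v : P) (x : Fin (m + 1) → P),
      br (Fin.cons (u * v) x) = u * br (Fin.cons v x) + v * br (Fin.cons u x))
    (I : Submodule F P) (hI : IsPoissonIdeal F (⇑br) I) (k : ℕ) :
    cI F (⇑br) I k ≤
      ⨆ (a : ℕ) (l : List ℕ) (_ : a + l.sum = k + 1) (_ : ∀ r ∈ l, 0 < r),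
        (if a = 0 then (1 : Submodule F P) else aPow F I (a - 1)) *
          lieProd F (⇑br) I l := by

  show cI F (⇑br) I k ≤ Tgt br I (k + 1)
  induction k with
  | zero =>
    refine le_trans ?_ (trm_le_Tgt br I (show (1 : ℕ) + List.sum [] = 1 by simp)
      (fun r hr => absurd hr List.not_mem_nil))
    rw [trm, if_neg one_ne_zero, lieProd_nil, mul_one]
    exact le_rfl
  | succ k ih =>
    show bk2 F (⇑br) (cI F (⇑br) I k) I ⊔ cI F (⇑br) I k * I ≤ Tgt br I (k + 2)
    refine sup_le ?_ ?_
    · refine (bk2_mono_left br ih).trans ?_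
      rw [Tgt]
      refine (bk2_iSup_le br _ I).trans (iSup_le fun a => ?_)
      refine (bk2_iSup_le br _ I).trans (iSup_le fun l => ?_)
      refine (bk2_iSup_le br _ I).trans (iSup_le fun hsum => ?_)
      refine (bk2_iSup_le br _ I).trans (iSup_le fun hposl => ?_)
      refine (key br I hLeib l a hposl).trans (le_of_eq ?_)
      congr 1
      omega
    · refine (mul_le_mul' ih le_rfl).trans ?_
      rw [Tgt, Submodule.iSup_mul]
      refine iSup_le fun a => ?_
      rw [Submodule.iSup_mul]
      refine iSup_le fun l => ?_
      rw [Submodule.iSup_mul]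
      refine iSup_le fun hsum => ?_
      rw [Submodule.iSup_mul]
      refine iSup_le fun hposl => ?_
      exact (trm_mul_I_le br I hLeib a l).trans (trm_le_Tgt br I (by omega) hposl)
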